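/- Let X be an integer-valued random variable with a discrete log-concave distribution that is symmetric about some point, with finite variance. Then M(X) ≤ 1/√(1 + 2·Var(X)); equivalently, M(X)^2·(1 + 2·Var(X)) ≤ 1. Equality holds for every two-sided geometric distribution f(k) = c_p·p^{|k|}, k ∈ ℤ, with 0 ≤ p < 1 and c_p = (1-p)/(1+p). (Theorem 1.1, symmetric case / Proposition 7.3, particular case.) -/

import Mathlib

open MeasureTheory ProbabilityTheory Real

/-- The probability mass function of an integer-valued random variable `X`
on a probability space `(Ω, μ)`: `f(k) = P{X = k}`. -/
noncomputable def pmfOf {Ω : Type*} [MeasurableSpace Ω] (μ : Measure Ω) (X : Ω → ℤ)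
    (k : ℤ) : ℝ :=
  (μ (X ⁻¹' {k})).toReal

/-- A probability function `f : ℤ → ℝ` is discrete log-concave: it is non-negative,
its support is an integer interval, and `f(k)^2 ≥ f(k-1)·f(k+1)` for all `k`. -/
def IsDiscreteLogConcavePMF (f : ℤ → ℝ) : Prop :=
  (∀ k : ℤ, 0 ≤ f k) ∧
  (∀ k l m : ℤ, k ≤ l → l ≤ m → 0 < f k → 0 < f m → 0 < f l) ∧
  (∀ k : ℤ, f (k - 1) * f (k + 1) ≤ f k ^ 2)

/-- `M(X) = sup_{k ∈ ℤ} P{X = k}`. -/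
noncomputable def maxProb {Ω : Type*} [MeasurableSpace Ω] (μ : Measure Ω) (X : Ω → ℤ) : ℝ :=
  ⨆ k : ℤ, pmfOf μ X k


open Real

variable {p : ℝ}

lemma hS (h0 : 0 ≤ p) (h1 : p < 1) : HasSum (fun n : ℕ => p ^ n) ((1 - p)⁻¹) :=
  hasSum_geometric_of_lt_one h0 h1

lemma hA (h0 : 0 ≤ p) (h1 : p < 1) :
    HasSum (fun n : ℕ => (n : ℝ) * p ^ n) (p / (1 - p) ^ 2) := by
  have := hasSum_coe_mul_geometric_of_norm_lt_one (r := p) (by rwa [Real.norm_eq_abs, abs_of_nonneg h0])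
  exact this

lemma sumB (h0 : 0 ≤ p) (h1 : p < 1) :
    Summable (fun n : ℕ => (n : ℝ) ^ 2 * p ^ n) := by
  have := summable_pow_mul_geometric_of_norm_lt_one (R := ℝ) 2 (r := p)
    (by rwa [Real.norm_eq_abs, abs_of_nonneg h0])
  exact this

lemma hB (h0 : 0 ≤ p) (h1 : p < 1) :
    HasSum (fun n : ℕ => (n : ℝ) ^ 2 * p ^ n) ((p + p ^ 2) / (1 - p) ^ 3) := by
  have hs := sumB h0 h1
  set B := ∑' n : ℕ, (n : ℝ) ^ 2 * p ^ n with hBdef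
  have hB0 : HasSum (fun n : ℕ => (n : ℝ) ^ 2 * p ^ n) B := hs.hasSum
  -- identity : B = p*B + 2p*A + p*S
  have hshift : HasSum (fun n : ℕ => ((n : ℝ) + 1) ^ 2 * p ^ (n + 1)) B := by
    have h' : HasSum (fun n : ℕ => ((n+1 : ℕ) : ℝ) ^ 2 * p ^ (n + 1)) (B - ∑ i ∈ Finset.range 1, (i:ℝ)^2 * p^i) :=
      (hasSum_nat_add_iff' (f := fun n : ℕ => (n : ℝ) ^ 2 * p ^ n) 1).2 hB0
    simp only [Finset.range_one, Finset.sum_singleton, Nat.cast_zero] at h'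
    ring_nf at h'
    norm_num at h'
    convert h' using 2 with n
    push_cast; ring
  have hcomb : HasSum (fun n : ℕ => ((n : ℝ) + 1) ^ 2 * p ^ (n + 1))
      (p * B + 2 * p * (p / (1 - p) ^ 2) + p * (1 - p)⁻¹) := by
    have h := ((hB0.mul_left p).add ((hA h0 h1).mul_left (2 * p))).add ((hS h0 h1).mul_left p)
    convert h using 2 with n
    · rfl
    · push_cast; ring
  have key : B = p * B + 2 * p * (p / (1 - p) ^ 2) + p * (1 - p)⁻¹ :=
    hshift.unique hcomb
  have h1p : (1 : ℝ) - p ≠ 0 := by linarith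
  have : B = (p + p ^ 2) / (1 - p) ^ 3 := by
    field_simp at key ⊢
    nlinarith [key]
  rw [← this]; exact hB0

lemma hAshift (h0 : 0 ≤ p) (h1 : p < 1) :
    HasSum (fun n : ℕ => ((n : ℝ) + 1) * p ^ (n + 1)) (p / (1 - p) ^ 2) := by
  have h' := (hasSum_nat_add_iff' (f := fun n : ℕ => (n : ℝ) * p ^ n) 1).2 (hA h0 h1)
  simp only [Finset.range_one, Finset.sum_singleton, Nat.cast_zero] at h'
  norm_num at h'
  convert h' using 2

lemma hBshift (h0 : 0 ≤ p) (h1 : p < 1) :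
    HasSum (fun n : ℕ => ((n : ℝ) + 1) ^ 2 * p ^ (n + 1)) ((p + p ^ 2) / (1 - p) ^ 3) := by
  have h' := (hasSum_nat_add_iff' (f := fun n : ℕ => (n : ℝ) ^ 2 * p ^ n) 1).2 (hB h0 h1)
  simp only [Finset.range_one, Finset.sum_singleton, Nat.cast_zero] at h'
  norm_num at h'
  convert h' using 2

lemma hSshift (h0 : 0 ≤ p) (h1 : p < 1) :
    HasSum (fun n : ℕ => p ^ (n + 1)) (p * (1 - p)⁻¹) := by
  have := (hS h0 h1).mul_left p
  convert this using 2 with n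
  · rfl
  · ring

section Core
variable {f : ℤ → ℝ} {p : ℝ}

/-- cross-multiplied ratio monotonicity -/
lemma ratio_mono (h0 : ∀ k, 0 ≤ f k) (h2 : ∀ k, f (k - 1) * f (k + 1) ≤ f k ^ 2)
    (j : ℤ) : ∀ d : ℕ, (∀ i, j ≤ i → i ≤ j + d → 0 < f i) →
    f (j + d + 1) * f j ≤ f (j + 1) * f (j + d) := by
  intro d
  induction d with
  | zero => intro _; simp [mul_comm]
  | succ d IH =>
    intro hpos
    have hk : 0 < f (j + d) := hpos _ (by omega) (by push_cast; omega)
    have hk1 : 0 < f (j + d + 1) := hpos _ (by omega) (by push_cast; omega)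
    have hIH := IH (fun i hi hi' => hpos i hi (by push_cast at hi' ⊢; omega))
    have hlc : f (j + d) * f (j + d + 1 + 1) ≤ f (j + d + 1) ^ 2 := by
      have := h2 (j + d + 1); rwa [add_sub_cancel_right] at this
    have h2' : 0 ≤ f (j + d + 1 + 1) := h0 _
    have h3' : 0 ≤ f j := h0 j
    have key : f (j + d + 1 + 1) * f j ≤ f (j + 1) * f (j + d + 1) := by
      nlinarith [mul_le_mul_of_nonneg_left hlc h3', mul_le_mul_of_nonneg_left hIH h2']
    have harith : j + (d + 1 : ℕ) + 1 = j + d + 1 + 1 := by push_cast; ring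
    have harith2 : j + (d + 1 : ℕ) = j + d + 1 := by push_cast; ring
    rw [harith, harith2]
    exact key

/-- strict geometric lower bound via a strict ratio bound -/
lemma geom_lower (h0 : ∀ k, 0 ≤ f k) (hp : 0 ≤ p) (a : ℤ) :
    ∀ d : ℕ, (∀ j, a ≤ j → j ≤ a + d → p * f j < f (j + 1)) →
    f a * p ^ (d + 1) < f (a + d + 1) := by
  intro d
  induction d with
  | zero =>
    intro hstep
    have h := hstep a le_rfl (by omega)
    simpa [mul_comm] using h
  | succ d IH =>
    intro hstep
    have hIH := IH (fun j hj hj' => hstep j hj (by push_cast at hj' ⊢; omega))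
    have hlast : p * f (a + d + 1) < f (a + d + 1 + 1) := by
      have := hstep (a + d + 1) (by omega) (by push_cast; omega)
      convert this using 3
    have harith : a + (d + 1 : ℕ) + 1 = a + d + 1 + 1 := by push_cast; ring
    rw [harith, pow_succ, pow_succ]
    calc f a * (p ^ d * p * p) = p * (f a * (p ^ d * p)) := by ring
    _ ≤ p * f (a + d + 1) := by
        rcases eq_or_lt_of_le hp with h | h
        · simp [← h]
        · refine (mul_le_mul_iff_right₀ h).2 ?_
          have := hIH.le; rwa [pow_succ] at this
    _ < f (a + d + 1 + 1) := hlast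
end Core

section Uni
variable {f : ℤ → ℝ} {s : ℤ}

lemma adj_mono (h0 : ∀ k, 0 ≤ f k)
    (h1 : ∀ k l m : ℤ, k ≤ l → l ≤ m → 0 < f k → 0 < f m → 0 < f l)
    (h2 : ∀ k, f (k - 1) * f (k + 1) ≤ f k ^ 2)
    (hs0 : 0 ≤ s) (hs1 : s ≤ 1) (hsym : ∀ k, f (s - k) = f k) :
    ∀ n, s ≤ n → f (n + 1) ≤ f n := by
  intro n hn
  by_contra hcon
  push_neg at hcon
  have hfn1 : 0 < f (n + 1) := lt_of_le_of_lt (h0 n) hcon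
  set m := s - (n + 1) with hm
  have hfm : 0 < f m := by rw [hm, hsym]; exact hfn1
  have hmn : m ≤ n := by omega
  have hpos : ∀ i, m ≤ i → i ≤ n + 1 → 0 < f i := fun i hi hi' =>
    h1 m i (n + 1) hi hi' hfm hfn1
  have hstep : ∀ j, m ≤ j → j ≤ n → 1 * f j < f (j + 1) := by
    intro j hj hj'
    rw [one_mul]
    rcases eq_or_lt_of_le hj' with rfl | hlt
    · exact hcon
    · have hd : j + ((n - j).toNat : ℤ) = n := by omega
      have hr := ratio_mono h0 h2 j (n - j).toNat (by
        intro i hi hi'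
        exact hpos i (by omega) (by omega))
      rw [hd] at hr
      have hj1 : 0 < f (j + 1) := hpos _ (by omega) (by omega)
      have : f (n + 1) * f j < f (j + 1) * f (n + 1) :=
        lt_of_le_of_lt hr ((mul_lt_mul_iff_right₀ hj1).2 hcon)
      rw [mul_comm (f (j + 1))] at this
      exact lt_of_mul_lt_mul_left this hfn1.le
  have hd2 : m + ((n - m).toNat : ℤ) + 1 = n + 1 := by omega
  have hgl := geom_lower h0 zero_le_one m (n - m).toNat (by
    intro j hj hj'
    exact hstep j hj (by omega))
  rw [hd2, one_pow, mul_one] at hgl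
  have heq : f (n + 1) = f m := by rw [hm]; rw [← hsym (n+1)]
  linarith
  
lemma le_center (h0 : ∀ k, 0 ≤ f k)
    (h1 : ∀ k l m : ℤ, k ≤ l → l ≤ m → 0 < f k → 0 < f m → 0 < f l)
    (h2 : ∀ k, f (k - 1) * f (k + 1) ≤ f k ^ 2)
    (hs0 : 0 ≤ s) (hs1 : s ≤ 1) (hsym : ∀ k, f (s - k) = f k) :
    ∀ k, f k ≤ f 0 := by
  have hmonoN : ∀ d : ℕ, f (s + d) ≤ f s := by
    intro d
    induction d with
    | zero => simp
    | succ d IH =>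
      have := adj_mono h0 h1 h2 hs0 hs1 hsym (s + d) (by omega)
      have harith : s + ((d + 1 : ℕ) : ℤ) = s + d + 1 := by push_cast; ring
      rw [harith]
      exact this.trans IH
  have hmono : ∀ n, s ≤ n → f n ≤ f s := by
    intro n hn
    have : s + (((n - s).toNat : ℤ)) = n := by omega
    rw [← this]
    exact hmonoN _
  have hs_eq : f s = f 0 := by simpa using hsym 0
  intro k
  rcases le_or_gt s k with h | h
  · exact (hmono k h).trans hs_eq.le
  · have : f k = f (s - k) := (hsym k).symm
    rw [this, ← hs_eq]
    exact hmono (s - k) (by omega)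
end Uni

section Compare
variable {f : ℤ → ℝ} {s : ℤ} {M p : ℝ}

lemma key_compare (h0 : ∀ k, 0 ≤ f k)
    (h1 : ∀ k l m : ℤ, k ≤ l → l ≤ m → 0 < f k → 0 < f m → 0 < f l)
    (h2 : ∀ k, f (k - 1) * f (k + 1) ≤ f k ^ 2)
    (hs0 : 0 ≤ s) (hs1 : s ≤ 1) (hsym : ∀ k, f (s - k) = f k)
    (hM : f 0 = M) (hMpos : 0 < M) (hp0 : 0 < p) (hp1 : p < 1)
    (hfsum : HasSum f 1)
    {g : ℤ → ℝ} (hg : ∀ k, g k = M * p ^ (max (k - s) (-k)).toNat)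
    (hgsum : HasSum g 1)
    {V Vg : ℝ}
    (hV : HasSum (fun k : ℤ => ((k : ℝ) - (s : ℝ) / 2) ^ 2 * f k) V)
    (hVg : HasSum (fun k : ℤ => ((k : ℝ) - (s : ℝ) / 2) ^ 2 * g k) Vg) :
    V ≤ Vg := by
  have hfs : f s = M := by rw [← hM]; simpa using hsym 0
  have hgval : ∀ n, s ≤ n → g n = M * p ^ (n - s).toNat := by
    intro n hn
    rw [hg]
    congr 2
    omega
  have hgs : g s = M := by rw [hgval s le_rfl]; simp
  have gsym : ∀ k, g (s - k) = g k := by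
    intro k
    rw [hg, hg]
    congr 2
    omega
  have fsym : ∀ k, f (s - k) = f k := hsym
  by_cases hall : ∀ n, g n ≤ f n
  · -- f = g everywhere
    have h00 : HasSum (fun k => f k - g k) 0 := by simpa using hfsum.sub hgsum
    have heq : ∀ k, f k = g k := by
      intro k
      have hle : f k - g k ≤ 0 :=
        le_hasSum h00 k (fun j _ => sub_nonneg.2 (hall j))
      have hge : 0 ≤ f k - g k := sub_nonneg.2 (hall k)
      linarith
    have : V = Vg := by
      refine hV.unique ?_
      have : (fun k : ℤ => ((k : ℝ) - (s : ℝ) / 2) ^ 2 * f k)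
           = (fun k : ℤ => ((k : ℝ) - (s : ℝ) / 2) ^ 2 * g k) := by
        funext k; rw [heq k]
      rw [this]; exact hVg
    linarith
  · push_neg at hall
    obtain ⟨n₀, hn₀⟩ := hall
    -- get a witness ≥ s
    have hex : ∃ d : ℕ, f (s + d) < g (s + d) := by
      rcases le_or_gt s n₀ with h | h
      · exact ⟨(n₀ - s).toNat, by rwa [show s + ((n₀ - s).toNat : ℤ) = n₀ by omega]⟩
      · refine ⟨(- n₀).toNat, ?_⟩
        have ha : s + ((- n₀).toNat : ℤ) = s - n₀ := by omega
        rw [ha, fsym, gsym]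
        exact hn₀
    classical
    set K' := Nat.find hex with hK'
    set K : ℤ := s + K' with hK
    have hKspec : f K < g K := Nat.find_spec hex
    have hK1 : 1 ≤ K' := by
      rcases Nat.eq_zero_or_pos K' with h | h
      · exfalso
        have := hKspec
        rw [hK, h] at this
        simp only [Nat.cast_zero, add_zero] at this
        rw [hfs, hgs] at this
        exact lt_irrefl _ this
      · exact h
    have hA : ∀ j, s ≤ j → j < K → g j ≤ f j := by
      intro j hj hjK
      have hd : ((j - s).toNat : ℤ) = j - s := by omega
      have hdlt : (j - s).toNat < K' := by omega
      have := Nat.find_min hex hdlt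
      rw [show s + ((j - s).toNat : ℤ) = j by omega] at this
      linarith
    -- propagate beyond K
    have hBstep : ∀ n, s + 1 ≤ n → f n < g n → f (n + 1) < g (n + 1) := by
      intro n hn hfg
      have hgn : g n = M * p ^ (n - s).toNat := hgval n (by omega)
      have hgn1 : g (n + 1) = M * p ^ ((n - s).toNat + 1) := by
        rw [hgval (n + 1) (by omega)]
        congr 2
        omega
      have hgpos : 0 < g (n + 1) := by
        rw [hgn1]; exact mul_pos hMpos (pow_pos hp0 _)
      rcases le_or_gt (f (n + 1)) 0 with hle | hfn1
      · linarith
      · have hfm : 0 < f (s - (n + 1)) := by rw [fsym]; exact hfn1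
        have hpos : ∀ i, s - (n + 1) ≤ i → i ≤ n + 1 → 0 < f i := fun i hi hi' =>
          h1 _ i _ hi hi' hfm hfn1
        rcases le_or_gt (f (n + 1)) (p * f n) with hr | hr
        · have : p * f n < p * g n := (mul_lt_mul_iff_right₀ hp0).2 hfg
          rw [hgn1, pow_succ]
          rw [hgn] at this
          calc f (n + 1) ≤ p * f n := hr
          _ < p * (M * p ^ (n - s).toNat) := this
          _ = M * (p ^ (n - s).toNat * p) := by ring
        · exfalso
          have hfn : 0 < f n := hpos n (by omega) (by omega)
          have hstep : ∀ j, s ≤ j → j ≤ s + ((n - s).toNat - 1 : ℕ) → p * f j < f (j + 1) := by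
            intro j hj hj'
            have hjn : j < n := by omega
            have hd : j + ((n - j).toNat : ℤ) = n := by omega
            have hr2 := ratio_mono h0 h2 j (n - j).toNat (by
              intro i hi hi'
              exact hpos i (by omega) (by omega))
            rw [hd] at hr2
            -- p * f n * f j < f (n+1) * f j ≤ f (j+1) * f n
            have hfj : 0 ≤ f j := h0 j
            have h3 : p * f n * f j ≤ f (n + 1) * f j := by
              rcases eq_or_lt_of_le hfj with h | h
              · rw [← h]; simp
              · exact (mul_le_mul_iff_left₀ h).2 hr.le
            have h4 : p * f n * f j ≤ f (j + 1) * f n := h3.trans hr2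
            have h5 : p * f j * f n ≤ f (j + 1) * f n := by
              calc p * f j * f n = p * f n * f j := by ring
              _ ≤ f (j + 1) * f n := h4
            have h6 : p * f j ≤ f (j + 1) := le_of_mul_le_mul_right h5 hfn
            rcases eq_or_lt_of_le h6 with heq | hlt
            · -- equality case: then chain through: p * f n * f j = f(n+1) f j ...
              have hfjpos : 0 < f j := hpos j (by omega) (by omega)
              have h3' : p * f n * f j < f (n + 1) * f j := (mul_lt_mul_iff_left₀ hfjpos).2 hr
              have h4' : p * f j * f n < f (j + 1) * f n := by
                calc p * f j * f n = p * f n * f j := by ring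
                _ < f (n + 1) * f j := h3'
                _ ≤ f (j + 1) * f n := hr2
              exact lt_of_mul_lt_mul_right h4' hfn.le
            · exact hlt
          have hd1 : (n - s).toNat - 1 + 1 = (n - s).toNat := by omega
          have hgl := geom_lower h0 hp0.le s ((n - s).toNat - 1) hstep
          rw [hd1] at hgl
          rw [show s + (((n - s).toNat - 1 : ℕ) : ℤ) + 1 = n by omega] at hgl
          rw [hfs] at hgl
          rw [hgn] at hfg
          linarith
    have hB : ∀ n, K ≤ n → f n < g n := by
      intro n hn
      have : ∀ d : ℕ, f (K + d) < g (K + d) := by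
        intro d
        induction d with
        | zero => simpa using hKspec
        | succ d IH =>
          have := hBstep (K + d) (by omega) IH
          rwa [show K + ((d + 1 : ℕ) : ℤ) = K + d + 1 by push_cast; ring]
      have hrw : K + (((n - K).toNat : ℕ) : ℤ) = n := by omega
      rw [← hrw]
      exact this _
    -- threshold comparison
    set t : ℝ := ((K : ℝ) - (s : ℝ) / 2) ^ 2 with ht
    have claim : ∀ n, s ≤ n → (((n : ℝ) - (s : ℝ) / 2) ^ 2 - t) * (f n - g n) ≤ 0 := by
      intro n hn
      have hs2 : (0 : ℝ) ≤ (s : ℝ) / 2 := by positivity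
      have hns : ((s : ℝ) / 2) ≤ (n : ℝ) := by
        have : (s : ℝ) ≤ (n : ℝ) := by exact_mod_cast hn
        linarith [hs2, this]
      rcases lt_or_ge n K with hlt | hge
      · have hfg : 0 ≤ f n - g n := sub_nonneg.2 (hA n hn hlt)
        have hw : ((n : ℝ) - (s : ℝ) / 2) ^ 2 ≤ t := by
          rw [ht]
          have h1' : (n : ℝ) ≤ (K : ℝ) := by exact_mod_cast hlt.le
          have h2' : (0 : ℝ) ≤ (n : ℝ) - (s : ℝ) / 2 := by linarith
          nlinarith
        exact mul_nonpos_of_nonpos_of_nonneg (by linarith) hfg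
      · have hfg : f n - g n ≤ 0 := sub_nonpos.2 (hB n hge).le
        have hw : t ≤ ((n : ℝ) - (s : ℝ) / 2) ^ 2 := by
          rw [ht]
          have h1' : (K : ℝ) ≤ (n : ℝ) := by exact_mod_cast hge
          have hsK : (s : ℝ) ≤ (K : ℝ) := by
            have : s ≤ K := by omega
            exact_mod_cast this
          nlinarith
        exact mul_nonpos_of_nonneg_of_nonpos (by linarith) hfg
    have pointwise : ∀ k : ℤ, ((k : ℝ) - (s : ℝ) / 2) ^ 2 * f k - ((k : ℝ) - (s : ℝ) / 2) ^ 2 * g k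
        ≤ t * (f k - g k) := by
      intro k
      rcases le_or_gt s k with h | h
      · have := claim k h
        nlinarith [this]
      · have hk' : s ≤ s - k := by omega
        have := claim (s - k) hk'
        rw [fsym, gsym] at this
        have hwk : ((((s - k) : ℤ) : ℝ) - (s : ℝ) / 2) ^ 2 = ((k : ℝ) - (s : ℝ) / 2) ^ 2 := by
          push_cast
          ring
        rw [hwk] at this
        nlinarith [this]
    have hdiff : HasSum (fun k : ℤ => ((k : ℝ) - (s : ℝ) / 2) ^ 2 * f k
        - ((k : ℝ) - (s : ℝ) / 2) ^ 2 * g k) (V - Vg) := hV.sub hVg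
    have hT : HasSum (fun k : ℤ => t * (f k - g k)) 0 := by
      simpa using (hfsum.sub hgsum).mul_left t
    have := hasSum_le pointwise hdiff hT
    linarith
end Compare

section CoreBound

lemma half_final {p : ℝ} (hp0 : 0 < p) (hp1 : p < 1) :
    ((1 - p) / 2) ^ 2 * (1 + 2 * (2 * ((1 - p) / 2) *
      ((p + p ^ 2) / (1 - p) ^ 3 + p / (1 - p) ^ 2 + (1 - p)⁻¹ / 4))) ≤ 1 := by
  have h1p : (0 : ℝ) < 1 - p := by linarith
  have hne : (1 : ℝ) - p ≠ 0 := ne_of_gt h1p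
  have key : ((1 - p) / 2) ^ 2 * (1 + 2 * (2 * ((1 - p) / 2) *
      ((p + p ^ 2) / (1 - p) ^ 3 + p / (1 - p) ^ 2 + (1 - p)⁻¹ / 4))) =
      3 * (1 - p) ^ 2 / 8 + p := by
    field_simp
    ring
  rw [key]
  nlinarith [sq_nonneg p]

lemma int_final {p : ℝ} (hp0 : 0 ≤ p) (hp1 : p < 1) :
    ((1 - p) / (1 + p)) ^ 2 *
      (1 + 2 * (2 * ((1 - p) / (1 + p) * ((p + p ^ 2) / (1 - p) ^ 3)))) = 1 := by
  have h1p : (1 : ℝ) - p ≠ 0 := by linarith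
  have h2p : (1 : ℝ) + p ≠ 0 := by linarith
  field_simp
  ring

variable {f : ℤ → ℝ} {s : ℤ}

lemma core_bound (h0 : ∀ k, 0 ≤ f k)
    (h1 : ∀ k l m : ℤ, k ≤ l → l ≤ m → 0 < f k → 0 < f m → 0 < f l)
    (h2 : ∀ k, f (k - 1) * f (k + 1) ≤ f k ^ 2)
    (hs0 : 0 ≤ s) (hs1 : s ≤ 1) (hsym : ∀ k, f (s - k) = f k)
    (hfsum : HasSum f 1) {V : ℝ}
    (hV : HasSum (fun k : ℤ => ((k : ℝ) - (s : ℝ) / 2) ^ 2 * f k) V) :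
    f 0 ^ 2 * (1 + 2 * V) ≤ 1 := by
  have hmax : ∀ k, f k ≤ f 0 := le_center h0 h1 h2 hs0 hs1 hsym
  set M := f 0 with hMdef
  have hMnn : 0 ≤ M := h0 0
  have hMpos : 0 < M := by
    rcases eq_or_lt_of_le hMnn with h | h
    · exfalso
      have hf0 : ∀ k, f k = 0 := fun k => le_antisymm ((hmax k).trans h.symm.le) (h0 k)
      have h10 : (1 : ℝ) = 0 := hfsum.unique
        (by rw [show f = (fun _ : ℤ => (0:ℝ)) from funext hf0]; exact hasSum_zero)
      norm_num at h10
    · exact h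
  have hVnn : 0 ≤ V := hasSum_le (fun k => mul_nonneg (sq_nonneg _) (h0 k)) hasSum_zero hV
  have hscase : s = 0 ∨ s = 1 := by omega
  rcases hscase with rfl | rfl
  · -- symmetric about an integer
    have hM1 : M ≤ 1 := le_hasSum hfsum 0 (fun j _ => h0 j)
    rcases eq_or_lt_of_le hM1 with hMeq | hMlt
    · -- degenerate: point mass
      have hzero : ∀ k : ℤ, k ≠ 0 → f k = 0 := by
        intro k hk
        have hsum2 : M + f k ≤ 1 := by
          have := sum_le_hasSum ({0, k} : Finset ℤ) (fun i _ => h0 i) hfsum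
          rwa [Finset.sum_pair (Ne.symm hk)] at this
        have := h0 k
        linarith [hMeq.ge]
      have hV0 : V = 0 := by
        refine hV.unique ?_
        have hfun : (fun k : ℤ => ((k : ℝ) - ((0:ℤ) : ℝ) / 2) ^ 2 * f k) = fun _ => (0 : ℝ) := by
          funext k
          rcases eq_or_ne k 0 with rfl | hk
          · norm_num
          · rw [hzero k hk, mul_zero]
        rw [hfun]
        exact hasSum_zero
      rw [hV0, hMeq]
      norm_num
    · -- nondegenerate, compare with two-sided geometric
      set p := (1 - M) / (1 + M) with hpdef
      have hp0 : 0 < p := div_pos (by linarith) (by linarith)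
      have hp1 : p < 1 := by
        rw [hpdef, div_lt_one (by linarith)]
        linarith
      have hnorm : M * (1 + p) = 1 - p := by
        rw [hpdef]
        field_simp
        ring
      clear_value p
      clear_value M
      set g : ℤ → ℝ := fun k => M * p ^ (max (k - 0) (-k)).toNat with hgdef
      have hgnat : ∀ n : ℕ, g (n : ℤ) = M * p ^ n := by
        intro n
        show M * p ^ (max ((n : ℤ) - 0) (-(n : ℤ))).toNat = M * p ^ n
        rw [show (max ((n : ℤ) - 0) (-(n : ℤ))).toNat = n from by omega]
      have hgneg : ∀ n : ℕ, g (-((n : ℤ) + 1)) = M * p ^ (n + 1) := by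
        intro n
        show M * p ^ (max (-((n : ℤ) + 1) - 0) (-(-((n : ℤ) + 1)))).toNat = M * p ^ (n + 1)
        rw [show (max (-((n : ℤ) + 1) - 0) (-(-((n : ℤ) + 1)))).toNat = n + 1 from by omega]
      clear_value g
      have hgsum : HasSum g 1 := by
        have hfe1 : (fun n : ℕ => g (n : ℤ)) = fun n : ℕ => M * p ^ n := funext hgnat
        have hnat : HasSum (fun n : ℕ => g (n : ℤ)) (M * (1 - p)⁻¹) := by
          rw [hfe1]; exact (hS hp0.le hp1).mul_left M
        have hfe2 : (fun n : ℕ => g (-((n : ℤ) + 1))) = fun n : ℕ => M * p ^ (n + 1) :=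
          funext hgneg
        have hneg : HasSum (fun n : ℕ => g (-((n : ℤ) + 1))) (M * (p * (1 - p)⁻¹)) := by
          rw [hfe2]
          have := (hSshift hp0.le hp1).mul_left M
          exact this
        have htot := HasSum.of_nat_of_neg_add_one (f := g) hnat hneg
        have hval : M * (1 - p)⁻¹ + M * (p * (1 - p)⁻¹) = 1 := by
          have h1p : (1 : ℝ) - p ≠ 0 := by linarith
          field_simp
          linarith [hnorm]
        rwa [hval] at htot
      set Vg : ℝ := 2 * (M * ((p + p ^ 2) / (1 - p) ^ 3)) with hVgdef
      have hVg : HasSum (fun k : ℤ => ((k : ℝ) - ((0:ℤ) : ℝ) / 2) ^ 2 * g k) Vg := by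
        have hfe1 : (fun n : ℕ => (((n : ℤ) : ℝ) - ((0:ℤ) : ℝ) / 2) ^ 2 * g (n : ℤ))
            = fun n : ℕ => M * ((n : ℝ) ^ 2 * p ^ n) := by
          funext n
          rw [hgnat n]
          push_cast
          ring
        have hnat : HasSum (fun n : ℕ => (((n : ℤ) : ℝ) - ((0:ℤ) : ℝ) / 2) ^ 2 * g (n : ℤ))
            (M * ((p + p ^ 2) / (1 - p) ^ 3)) := by
          rw [hfe1]; exact (hB hp0.le hp1).mul_left M
        have hfe2 : (fun n : ℕ => ((((-((n : ℤ) + 1)) : ℤ) : ℝ) - ((0:ℤ) : ℝ) / 2) ^ 2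
            * g (-((n : ℤ) + 1))) = fun n : ℕ => M * (((n : ℝ) + 1) ^ 2 * p ^ (n + 1)) := by
          funext n
          rw [hgneg n]
          push_cast
          ring
        have hneg : HasSum (fun n : ℕ => ((((-((n : ℤ) + 1)) : ℤ) : ℝ) - ((0:ℤ) : ℝ) / 2) ^ 2
            * g (-((n : ℤ) + 1))) (M * ((p + p ^ 2) / (1 - p) ^ 3)) := by
          rw [hfe2]; exact (hBshift hp0.le hp1).mul_left M
        have htot := HasSum.of_nat_of_neg_add_one
          (f := fun k : ℤ => ((k : ℝ) - ((0:ℤ) : ℝ) / 2) ^ 2 * g k) hnat hneg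
        rw [hVgdef]
        convert htot using 1
        ring
      have hVle : V ≤ Vg :=
        key_compare (s := 0) h0 h1 h2 hs0 hs1 hsym hMdef.symm hMpos hp0 hp1 hfsum
          (g := g) (fun k => by simp only [hgdef]) hgsum (V := V) (Vg := Vg) hV hVg
      have hMp : M = (1 - p) / (1 + p) := by
        have h1p : (1 : ℝ) + p ≠ 0 := by linarith
        field_simp
        linarith [hnorm]
      have hfinal : M ^ 2 * (1 + 2 * Vg) = 1 := by
        rw [hVgdef, hMp]
        exact int_final hp0.le hp1
      calc M ^ 2 * (1 + 2 * V) ≤ M ^ 2 * (1 + 2 * Vg) :=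
        mul_le_mul_of_nonneg_left (by linarith) (sq_nonneg M)
      _ = 1 := hfinal
  · -- symmetric about a half-integer
    have hf10 : f 1 = f 0 := by simpa using (hsym 1).symm
    have hM1 : 2 * M ≤ 1 := by
      have := sum_le_hasSum ({0, 1} : Finset ℤ) (fun i _ => h0 i) hfsum
      rw [Finset.sum_pair (by norm_num : (0:ℤ) ≠ 1)] at this
      have hM0 : M = f 0 := hMdef
      linarith [hf10, this]
    rcases eq_or_lt_of_le hM1 with hMeq | hMlt
    · -- degenerate: mass 1/2 on each of {0,1}
      have hzero : ∀ k : ℤ, k ≠ 0 → k ≠ 1 → f k = 0 := by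
        intro k hk0 hk1
        have hmem : (0 : ℤ) ∉ ({1, k} : Finset ℤ) := by simp [Ne.symm hk0]
        have hsum3 : f 0 + (f 1 + f k) ≤ 1 := by
          have := sum_le_hasSum ({0, 1, k} : Finset ℤ) (fun i _ => h0 i) hfsum
          rwa [Finset.sum_insert hmem, Finset.sum_pair (Ne.symm hk1)] at this
        have := h0 k
        have hM0 : M = f 0 := hMdef
        linarith [hf10, hMeq.ge]
      have hV14 : V = 1 / 4 := by
        refine hV.unique ?_
        have hne : ∀ k : ℤ, k ∉ ({0, 1} : Finset ℤ) →
            ((k : ℝ) - ((1:ℤ) : ℝ) / 2) ^ 2 * f k = 0 := by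
          intro k hk
          simp only [Finset.mem_insert, Finset.mem_singleton] at hk
          push_neg at hk
          rw [hzero k hk.1 hk.2, mul_zero]
        have := hasSum_sum_of_ne_finset_zero (L := SummationFilter.unconditional ℤ) hne
        convert this using 1
        rw [Finset.sum_pair (by norm_num : (0:ℤ) ≠ 1)]
        have hM0 : f 0 = M := rfl
        have hf1 : f 1 = M := by rw [hf10]
        rw [hM0, hf1]
        have hMval : M = 1 / 2 := by linarith
        rw [hMval]
        norm_num
      rw [hV14]
      have hMval : M = 1 / 2 := by linarith
      rw [hMval]
      norm_num
    · -- nondegenerate half-integer case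
      set p := 1 - 2 * M with hpdef
      have hp0 : 0 < p := by rw [hpdef]; linarith
      have hp1 : p < 1 := by rw [hpdef]; linarith
      have hMp : M = (1 - p) / 2 := by rw [hpdef]; ring
      clear_value p
      clear_value M
      set g : ℤ → ℝ := fun k => M * p ^ (max (k - 1) (-k)).toNat with hgdef
      have hgnat : ∀ n : ℕ, g ((n : ℤ) + 1) = M * p ^ n := by
        intro n
        show M * p ^ (max ((n : ℤ) + 1 - 1) (-((n : ℤ) + 1))).toNat = M * p ^ n
        rw [show (max ((n : ℤ) + 1 - 1) (-((n : ℤ) + 1))).toNat = n from by omega]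
      have hg0 : g 0 = M := by
        show M * p ^ (max ((0:ℤ) - 1) (-(0:ℤ))).toNat = M
        rw [show (max ((0:ℤ) - 1) (-(0:ℤ))).toNat = 0 from by omega]
        norm_num
      have hgneg : ∀ n : ℕ, g (-((n : ℤ) + 1)) = M * p ^ (n + 1) := by
        intro n
        show M * p ^ (max (-((n : ℤ) + 1) - 1) (-(-((n : ℤ) + 1)))).toNat = M * p ^ (n + 1)
        rw [show (max (-((n : ℤ) + 1) - 1) (-(-((n : ℤ) + 1)))).toNat = n + 1 from by omega]
      have hgnat' : ∀ n : ℕ, g ((n + 1 : ℕ) : ℤ) = M * p ^ n := by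
        intro n
        have : ((n + 1 : ℕ) : ℤ) = (n : ℤ) + 1 := by push_cast; ring
        rw [this]
        exact hgnat n
      clear_value g
      have hgsum : HasSum g 1 := by
        have hfe1 : (fun n : ℕ => g ((n + 1 : ℕ) : ℤ)) = fun n : ℕ => M * p ^ n :=
          funext hgnat'
        have hnat1 : HasSum (fun n : ℕ => g ((n + 1 : ℕ) : ℤ)) (M * (1 - p)⁻¹) := by
          rw [hfe1]; exact (hS hp0.le hp1).mul_left M
        have hnat : HasSum (fun n : ℕ => g (n : ℤ)) (M * (1 - p)⁻¹ + M) := by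
          have h' := (hasSum_nat_add_iff (f := fun n : ℕ => g (n : ℤ)) 1).1 hnat1
          rw [Finset.sum_range_one] at h'
          simpa [hg0] using h'
        have hfe2 : (fun n : ℕ => g (-((n : ℤ) + 1))) = fun n : ℕ => M * p ^ (n + 1) :=
          funext hgneg
        have hneg : HasSum (fun n : ℕ => g (-((n : ℤ) + 1))) (M * (p * (1 - p)⁻¹)) := by
          rw [hfe2]; exact (hSshift hp0.le hp1).mul_left M
        have htot := HasSum.of_nat_of_neg_add_one (f := g) hnat hneg
        have hval : M * (1 - p)⁻¹ + M + M * (p * (1 - p)⁻¹) = 1 := by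
          have h1p : (1 : ℝ) - p ≠ 0 := by linarith
          rw [hMp]
          field_simp
          ring
        rwa [hval] at htot
      set Vg : ℝ := 2 * M * ((p + p ^ 2) / (1 - p) ^ 3 + p / (1 - p) ^ 2 + (1 - p)⁻¹ / 4)
          with hVgdef
      have hVg : HasSum (fun k : ℤ => ((k : ℝ) - ((1:ℤ) : ℝ) / 2) ^ 2 * g k) Vg := by
        have hfe1 : (fun n : ℕ => ((((n + 1 : ℕ) : ℤ) : ℝ) - ((1:ℤ) : ℝ) / 2) ^ 2
            * g ((n + 1 : ℕ) : ℤ))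
            = fun n : ℕ => M * ((n : ℝ) ^ 2 * p ^ n + (n : ℝ) * p ^ n + p ^ n / 4) := by
          funext n
          rw [hgnat' n]
          push_cast
          ring
        have hnat1 : HasSum (fun n : ℕ => ((((n + 1 : ℕ) : ℤ) : ℝ) - ((1:ℤ) : ℝ) / 2) ^ 2
            * g ((n + 1 : ℕ) : ℤ))
            (M * ((p + p ^ 2) / (1 - p) ^ 3 + p / (1 - p) ^ 2 + (1 - p)⁻¹ / 4)) := by
          rw [hfe1]
          exact (((hB hp0.le hp1).add (hA hp0.le hp1)).add
            ((hS hp0.le hp1).div_const 4)).mul_left M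
        have hnat : HasSum (fun n : ℕ => (((n : ℤ) : ℝ) - ((1:ℤ) : ℝ) / 2) ^ 2 * g (n : ℤ))
            (M * ((p + p ^ 2) / (1 - p) ^ 3 + p / (1 - p) ^ 2 + (1 - p)⁻¹ / 4) + M / 4) := by
          have h' := (hasSum_nat_add_iff
            (f := fun n : ℕ => (((n : ℤ) : ℝ) - ((1:ℤ) : ℝ) / 2) ^ 2 * g (n : ℤ)) 1).1 hnat1
          rw [Finset.sum_range_one] at h'
          have h0eq : ((((0:ℕ) : ℤ) : ℝ) - ((1:ℤ) : ℝ) / 2) ^ 2 * g ((0:ℕ) : ℤ) = M / 4 := by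
            rw [show ((0:ℕ) : ℤ) = (0:ℤ) from rfl, hg0]
            push_cast
            ring
          rw [h0eq] at h'
          exact h'
        have hfe2 : (fun n : ℕ => ((((-((n : ℤ) + 1)) : ℤ) : ℝ) - ((1:ℤ) : ℝ) / 2) ^ 2
            * g (-((n : ℤ) + 1)))
            = fun n : ℕ => M * (((n : ℝ) + 1) ^ 2 * p ^ (n + 1) + ((n : ℝ) + 1) * p ^ (n + 1)
              + p ^ (n + 1) / 4) := by
          funext n
          rw [hgneg n]
          push_cast
          ring
        have hneg : HasSum (fun n : ℕ => ((((-((n : ℤ) + 1)) : ℤ) : ℝ) - ((1:ℤ) : ℝ) / 2) ^ 2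
            * g (-((n : ℤ) + 1)))
            (M * ((p + p ^ 2) / (1 - p) ^ 3 + p / (1 - p) ^ 2 + (p * (1 - p)⁻¹) / 4)) := by
          rw [hfe2]
          exact (((hBshift hp0.le hp1).add (hAshift hp0.le hp1)).add
            ((hSshift hp0.le hp1).div_const 4)).mul_left M
        have htot := HasSum.of_nat_of_neg_add_one
          (f := fun k : ℤ => ((k : ℝ) - ((1:ℤ) : ℝ) / 2) ^ 2 * g k) hnat hneg
        have h1p : (1 : ℝ) - p ≠ 0 := by linarith
        have hval : M * ((p + p ^ 2) / (1 - p) ^ 3 + p / (1 - p) ^ 2 + (1 - p)⁻¹ / 4) + M / 4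
            + M * ((p + p ^ 2) / (1 - p) ^ 3 + p / (1 - p) ^ 2 + (p * (1 - p)⁻¹) / 4) = Vg := by
          rw [hVgdef]
          linear_combination (-(M / 4)) * mul_inv_cancel₀ h1p
        rwa [hval] at htot
      have hVle : V ≤ Vg :=
        key_compare (s := 1) h0 h1 h2 hs0 hs1 hsym hMdef.symm hMpos hp0 hp1 hfsum
          (g := g) (fun k => by simp only [hgdef]) hgsum (V := V) (Vg := Vg) hV hVg
      have hfinal : M ^ 2 * (1 + 2 * Vg) ≤ 1 := by
        rw [hVgdef, hMp]
        exact half_final hp0 hp1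
      calc M ^ 2 * (1 + 2 * V) ≤ M ^ 2 * (1 + 2 * Vg) :=
        mul_le_mul_of_nonneg_left (by linarith) (sq_nonneg M)
      _ ≤ 1 := hfinal
end CoreBound

section Plumbing
open MeasureTheory ProbabilityTheory
open scoped ENNReal NNReal

variable {Ω : Type*} [MeasurableSpace Ω] {μ : Measure Ω} [IsProbabilityMeasure μ] {X : Ω → ℤ}

lemma weighted_hasSum (hX : Measurable X) (φ : ℤ → ℝ)
    (hint : Integrable (fun ω => φ (X ω)) μ) :
    HasSum (fun k => φ k * pmfOf μ X k) (∫ ω, φ (X ω) ∂μ) := by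
  set ν := Measure.map X μ with hνdef
  have hφm : Measurable φ := measurable_from_top
  have hφs : AEStronglyMeasurable φ ν := hφm.stronglyMeasurable.aestronglyMeasurable
  have hint' : Integrable φ ν := (integrable_map_measure hφs hX.aemeasurable).2 hint
  have key : ∫ k, φ k ∂ν = ∑' k, (ν {k}).toReal • φ k := integral_countable' hint'
  have hmap : ∫ ω, φ (X ω) ∂μ = ∫ k, φ k ∂ν := (integral_map hX.aemeasurable hφs).symm
  have hfin : (∑' k, (‖φ k‖₊ : ℝ≥0∞) * ν {k}) < ⊤ := by
    rw [← lintegral_countable']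
    exact hint'.2
  have hsummable0 : Summable (fun k => ((‖φ k‖₊ : ℝ≥0∞) * ν {k}).toReal) :=
    ENNReal.summable_toReal hfin.ne
  have heq : ∀ k, ((‖φ k‖₊ : ℝ≥0∞) * ν {k}).toReal = ‖φ k * (ν {k}).toReal‖ := by
    intro k
    rw [ENNReal.toReal_mul, norm_mul, Real.norm_of_nonneg ENNReal.toReal_nonneg]
    simp
  have hsummable : Summable (fun k => φ k * (ν {k}).toReal) :=
    Summable.of_norm ((summable_congr heq).1 hsummable0)
  have hpmf : ∀ k, pmfOf μ X k = (ν {k}).toReal := by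
    intro k
    rw [pmfOf, hνdef, Measure.map_apply hX (measurableSet_singleton k)]
  have hfuneq : (fun k => φ k * pmfOf μ X k) = fun k => φ k * (ν {k}).toReal := by
    funext k; rw [hpmf k]
  rw [hfuneq, hmap, key]
  have : ∑' k, (ν {k}).toReal • φ k = ∑' k, φ k * (ν {k}).toReal :=
    tsum_congr fun k => by rw [smul_eq_mul, mul_comm]
  rw [this]
  exact hsummable.hasSum

lemma pmf_hasSum (hX : Measurable X) : HasSum (pmfOf μ X) 1 := by
  have h := weighted_hasSum (μ := μ) hX (fun _ => (1 : ℝ)) (integrable_const 1)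
  simp only [one_mul] at h
  have hval : ∫ _ : Ω, (1 : ℝ) ∂μ = 1 := by simp
  rwa [hval] at h

lemma var_le_second_moment {Y : Ω → ℝ} (hY : MemLp Y 2 μ) (t : ℝ) :
    variance Y μ ≤ ∫ ω, (Y ω - t) ^ 2 ∂μ := by
  have hvd : variance Y μ = (∫ ω, (Y ω) ^ 2 ∂μ) - (∫ ω, Y ω ∂μ) ^ 2 := by
    have := variance_eq_sub hY
    simpa [Pi.pow_apply] using this
  have hi1 : Integrable (fun ω => Y ω ^ 2) μ := hY.integrable_sq
  have hi2 : Integrable (fun ω => 2 * t * Y ω) μ := (hY.integrable one_le_two).const_mul _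
  have hexp : (fun ω => (Y ω - t) ^ 2) = fun ω => Y ω ^ 2 - 2 * t * Y ω + t ^ 2 :=
    funext fun ω => by ring
  have hi12 : Integrable (fun ω => Y ω ^ 2 - 2 * t * Y ω) μ := hi1.sub hi2
  rw [hexp, integral_add hi12 (integrable_const _), integral_sub hi1 hi2]
  have hconst : ∫ _ : Ω, t ^ 2 ∂μ = t ^ 2 := by simp
  have hmul : ∫ ω, 2 * t * Y ω ∂μ = 2 * t * ∫ ω, Y ω ∂μ := by
    rw [integral_const_mul]
  rw [hconst, hmul, hvd]
  nlinarith [sq_nonneg ((∫ ω, Y ω ∂μ) - t)]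
end Plumbing

/-- Theorem 1.1 (symmetric case) / Proposition 7.3 (particular case): for a
symmetric discrete log-concave random variable `X` with finite variance,
`M(X)^2·(1 + 2·Var(X)) ≤ 1`, with equality for every two-sided geometric
distribution `f(k) = ((1-p)/(1+p))·p^{|k|}`, `0 ≤ p < 1`. -/
theorem maxProb_upper_bound_of_symmetric_logConcave
    {Ω : Type*} [MeasurableSpace Ω] (μ : Measure Ω) [IsProbabilityMeasure μ]
    (X : Ω → ℤ) (hX : Measurable X)
    (hlc : IsDiscreteLogConcavePMF (pmfOf μ X))
    (hsym : ∃ c : ℤ, ∀ k : ℤ, pmfOf μ X k = pmfOf μ X (c - k))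
    (hvar : MemLp (fun ω => (X ω : ℝ)) 2 μ) :
    (maxProb μ X ≤ 1 / Real.sqrt (1 + 2 * variance (fun ω => (X ω : ℝ)) μ) ∧
      maxProb μ X ^ 2 * (1 + 2 * variance (fun ω => (X ω : ℝ)) μ) ≤ 1) ∧
    -- equality for every two-sided geometric distribution (mean 0, variance 2p/(1-p)²)
    (∀ p : ℝ, 0 ≤ p → p < 1 →
      (⨆ k : ℤ, ((1 - p) / (1 + p)) * p ^ k.natAbs) ^ 2 *
        (1 + 2 * ∑' k : ℤ, (k : ℝ) ^ 2 * (((1 - p) / (1 + p)) * p ^ k.natAbs)) = 1) := by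
  obtain ⟨h0, h1, h2⟩ := hlc
  obtain ⟨c, hsymc⟩ := hsym
  set f := pmfOf μ X with hfdef
  set a := c / 2 with hadef
  set s := c % 2 with hsdef
  have hc : c = 2 * a + s := by omega
  have hs0 : 0 ≤ s := by omega
  have hs1 : s ≤ 1 := by omega
  set F : ℤ → ℝ := fun j => f (j + a) with hFdef
  have hF0 : ∀ k, 0 ≤ F k := fun k => h0 _
  have hF1 : ∀ k l m : ℤ, k ≤ l → l ≤ m → 0 < F k → 0 < F m → 0 < F l :=
    fun k l m hkl hlm hk hm => h1 _ _ _ (by omega) (by omega) hk hm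
  have hF2 : ∀ k, F (k - 1) * F (k + 1) ≤ F k ^ 2 := by
    intro k
    show f (k - 1 + a) * f (k + 1 + a) ≤ f (k + a) ^ 2
    rw [show k - 1 + a = (k + a) - 1 by ring, show k + 1 + a = (k + a) + 1 by ring]
    exact h2 (k + a)
  have hFsym : ∀ k, F (s - k) = F k := by
    intro k
    show f (s - k + a) = f (k + a)
    rw [show s - k + a = c - (k + a) by omega]
    exact (hsymc (k + a)).symm
  have hfsum : HasSum f 1 := pmf_hasSum hX
  have hFsum : HasSum F 1 := ((Equiv.addRight a).hasSum_iff (f := f) (a := 1)).2 hfsum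
  have hsub : MemLp (fun ω => (X ω : ℝ) - (c : ℝ) / 2) 2 μ := hvar.sub (memLp_const _)
  have hint : Integrable (fun ω => ((X ω : ℝ) - (c : ℝ) / 2) ^ 2) μ := hsub.integrable_sq
  have hW := weighted_hasSum hX (fun k : ℤ => ((k : ℝ) - (c : ℝ) / 2) ^ 2) hint
  set I := ∫ ω, ((X ω : ℝ) - (c : ℝ) / 2) ^ 2 ∂μ with hIdef
  have hIvar : variance (fun ω => (X ω : ℝ)) μ ≤ I :=
    var_le_second_moment hvar ((c : ℝ) / 2)
  have hFV : HasSum (fun j : ℤ => ((j : ℝ) - (s : ℝ) / 2) ^ 2 * F j) I := by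
    have h' := ((Equiv.addRight a).hasSum_iff
      (f := fun k : ℤ => ((k : ℝ) - (c : ℝ) / 2) ^ 2 * f k) (a := I)).2 hW
    have hcR : (c : ℝ) = 2 * (a : ℝ) + (s : ℝ) := by exact_mod_cast hc
    have hfe : (fun j : ℤ => ((j : ℝ) - (s : ℝ) / 2) ^ 2 * F j)
        = fun j : ℤ => (((j + a : ℤ) : ℝ) - (c : ℝ) / 2) ^ 2 * f (j + a) := by
      funext j
      show ((j : ℝ) - (s : ℝ) / 2) ^ 2 * f (j + a)
        = (((j + a : ℤ) : ℝ) - (c : ℝ) / 2) ^ 2 * f (j + a)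
      congr 1
      rw [hcR]
      push_cast
      ring
    rw [hfe]
    exact h'
  have hcore := core_bound hF0 hF1 hF2 hs0 hs1 hFsym hFsum hFV
  have hFmax : ∀ k, F k ≤ F 0 := le_center hF0 hF1 hF2 hs0 hs1 hFsym
  have hfmax : ∀ k, f k ≤ f a := by
    intro k
    have h' : f (k - a + a) ≤ f (0 + a) := hFmax (k - a)
    rwa [show k - a + a = k by ring, zero_add] at h'
  have hbdd : BddAbove (Set.range f) := ⟨f a, by rintro x ⟨k, rfl⟩; exact hfmax k⟩
  have hmaxval : maxProb μ X = f a :=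
    le_antisymm (ciSup_le hfmax) (le_ciSup hbdd a)
  have hF0M : F 0 = f a := by show f (0 + a) = f a; rw [zero_add]
  rw [hF0M] at hcore
  set Var := variance (fun ω => (X ω : ℝ)) μ with hVardef
  have hVar0 : 0 ≤ Var := variance_nonneg _ _
  have hM0 : 0 ≤ f a := h0 a
  have main2 : maxProb μ X ^ 2 * (1 + 2 * Var) ≤ 1 := by
    rw [hmaxval]
    calc f a ^ 2 * (1 + 2 * Var) ≤ f a ^ 2 * (1 + 2 * I) :=
      mul_le_mul_of_nonneg_left (by linarith) (sq_nonneg _)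
    _ ≤ 1 := hcore
  have main1 : maxProb μ X ≤ 1 / Real.sqrt (1 + 2 * Var) := by
    have hD : (0 : ℝ) < 1 + 2 * Var := by linarith
    have hMval : 0 ≤ maxProb μ X := hmaxval ▸ hM0
    have hsq : maxProb μ X ^ 2 ≤ 1 / (1 + 2 * Var) := (le_div_iff₀ hD).2 main2
    calc maxProb μ X = Real.sqrt (maxProb μ X ^ 2) := (Real.sqrt_sq hMval).symm
    _ ≤ Real.sqrt (1 / (1 + 2 * Var)) := Real.sqrt_le_sqrt hsq
    _ = 1 / Real.sqrt (1 + 2 * Var) := by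
        rw [one_div, one_div, Real.sqrt_inv]
  refine ⟨⟨main1, main2⟩, ?_⟩
  intro p hp0 hp1
  set cp := (1 - p) / (1 + p) with hcpdef
  have hcp0 : 0 < cp := div_pos (by linarith) (by linarith)
  have hb : ∀ k : ℤ, cp * p ^ k.natAbs ≤ cp := by
    intro k
    have h1' : p ^ k.natAbs ≤ 1 := pow_le_one₀ hp0 hp1.le
    nlinarith [hcp0.le]
  have hsup : (⨆ k : ℤ, cp * p ^ k.natAbs) = cp := by
    refine le_antisymm (ciSup_le hb) ?_
    have hbdd2 : BddAbove (Set.range fun k : ℤ => cp * p ^ k.natAbs) :=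
      ⟨cp, by rintro x ⟨k, rfl⟩; exact hb k⟩
    have := le_ciSup hbdd2 (0 : ℤ)
    simpa using this
  have htsum : HasSum (fun k : ℤ => (k : ℝ) ^ 2 * (cp * p ^ k.natAbs))
      (cp * ((p + p ^ 2) / (1 - p) ^ 3) + cp * ((p + p ^ 2) / (1 - p) ^ 3)) := by
    have hnat : HasSum (fun n : ℕ => (((n : ℤ) : ℝ)) ^ 2 * (cp * p ^ ((n : ℤ)).natAbs))
        (cp * ((p + p ^ 2) / (1 - p) ^ 3)) := by
      have hfe : (fun n : ℕ => (((n : ℤ) : ℝ)) ^ 2 * (cp * p ^ ((n : ℤ)).natAbs))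
          = fun n : ℕ => cp * ((n : ℝ) ^ 2 * p ^ n) := by
        funext n
        rw [show ((n : ℤ)).natAbs = n from by omega]
        push_cast
        ring
      rw [hfe]
      exact (hB hp0 hp1).mul_left cp
    have hneg : HasSum (fun n : ℕ => (((-((n : ℤ) + 1) : ℤ)) : ℝ) ^ 2
        * (cp * p ^ ((-((n : ℤ) + 1))).natAbs)) (cp * ((p + p ^ 2) / (1 - p) ^ 3)) := by
      have hfe : (fun n : ℕ => (((-((n : ℤ) + 1) : ℤ)) : ℝ) ^ 2
          * (cp * p ^ ((-((n : ℤ) + 1))).natAbs))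
          = fun n : ℕ => cp * (((n : ℝ) + 1) ^ 2 * p ^ (n + 1)) := by
        funext n
        rw [show ((-((n : ℤ) + 1))).natAbs = n + 1 from by omega]
        push_cast
        ring
      rw [hfe]
      exact (hBshift hp0 hp1).mul_left cp
    exact HasSum.of_nat_of_neg_add_one
      (f := fun k : ℤ => (k : ℝ) ^ 2 * (cp * p ^ k.natAbs)) hnat hneg
  rw [hsup, htsum.tsum_eq]
  have hfin := int_final hp0 hp1
  calc cp ^ 2 * (1 + 2 * (cp * ((p + p ^ 2) / (1 - p) ^ 3)
      + cp * ((p + p ^ 2) / (1 - p) ^ 3)))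
      = cp ^ 2 * (1 + 2 * (2 * (cp * ((p + p ^ 2) / (1 - p) ^ 3)))) := by ring
  _ = 1 := hfin
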